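/- For p ≥ 0, m ≥ 0, and |x| < 1, ∑_{n=0}^∞ C(n+m, n) (n+r)_{p,λ} x^n = (1/(1-x)^{m+1}) ∑_{k=0}^p {p+r brace k+r}_{r,λ} k! C(k+m, m) ( x/(1-x) )^k. -/

import Mathlib

/-- Generalized falling factorial `(y)_{m,λ} = y(y-λ)⋯(y-(m-1)λ)`. -/
noncomputable def degFallFact (y l : ℝ) (m : ℕ) : ℝ :=
  ∏ i ∈ Finset.range m, (y - i * l)

lemma choose_id (n m k : ℕ) :
    (n + m).choose m * n.choose k = (n + m).choose (m + k) * (m + k).choose m := by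
  rcases le_or_gt k n with h | h
  · have h1 : m + k ≤ n + m := by omega
    have h2 : m ≤ m + k := Nat.le_add_right m k
    have h3 := Nat.choose_mul (n := n + m) h2
    simp only [Nat.add_sub_cancel_left, Nat.add_sub_cancel] at h3
    omega
  · rw [Nat.choose_eq_zero_of_lt h, Nat.choose_eq_zero_of_lt (show n + m < m + k by omega)]
    simp

lemma prod_cast (n k : ℕ) :
    (∏ i ∈ Finset.range k, ((n : ℝ) - i)) = (n.descFactorial k : ℝ) := by
  rcases le_or_gt k n with h | h
  · rw [Nat.descFactorial_eq_prod_range, Nat.cast_prod]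
    apply Finset.prod_congr rfl
    intro i hi
    simp only [Finset.mem_range] at hi
    have : i ≤ n := by omega
    push_cast [this]
    ring
  · rw [Nat.descFactorial_eq_zero_iff_lt.2 h, Nat.cast_zero]
    apply Finset.prod_eq_zero (Finset.mem_range.2 h)
    simp

lemma hasSum_aux (m k : ℕ) (x : ℝ) (hx : |x| < 1) :
    HasSum (fun n : ℕ => ((n + m).choose m : ℝ) * (∏ i ∈ Finset.range k, ((n : ℝ) - i)) * x ^ n)
      (((k + m).choose m : ℝ) * k.factorial * x ^ k / (1 - x) ^ (m + k + 1)) := by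
  have hx' : ‖x‖ < 1 := by rwa [Real.norm_eq_abs]
  set f : ℕ → ℝ :=
    fun n => ((n + m).choose m : ℝ) * (∏ i ∈ Finset.range k, ((n : ℝ) - i)) * x ^ n with hf
  set T : ℝ := ((k + m).choose m : ℝ) * k.factorial * x ^ k / (1 - x) ^ (m + k + 1) with hT
  have h := (hasSum_choose_mul_geometric_of_norm_lt_one (𝕜 := ℝ) (m + k) hx').mul_left
    ((((m + k).choose m : ℝ) * k.factorial) * x ^ k)
  have h2 : HasSum (fun j : ℕ => f (j + k)) T := by
    have hfun : (fun j : ℕ => f (j + k)) = fun j : ℕ =>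
        ((((m + k).choose m : ℝ) * k.factorial) * x ^ k) *
          ((((j + (m + k)).choose (m + k) : ℕ) : ℝ) * x ^ j) := by
      funext j
      simp only [hf]
      rw [prod_cast]
      have key : (j + k + m).choose m * (j + k).descFactorial k =
          (j + (m + k)).choose (m + k) * ((m + k).choose m * k.factorial) := by
        rw [Nat.descFactorial_eq_factorial_mul_choose, show j + (m + k) = j + k + m by ring]
        calc (j + k + m).choose m * (k.factorial * (j + k).choose k)
            = ((j + k + m).choose m * (j + k).choose k) * k.factorial := by ring
          _ = ((j + k + m).choose (m + k) * (m + k).choose m) * k.factorial := by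
              rw [choose_id (j + k) m k]
          _ = (j + k + m).choose (m + k) * ((m + k).choose m * k.factorial) := by ring
      have keyR : ((j + k + m).choose m : ℝ) * ((j + k).descFactorial k : ℝ) =
          ((j + (m + k)).choose (m + k) : ℝ) * (((m + k).choose m : ℝ) * k.factorial) := by
        exact_mod_cast congrArg (Nat.cast : ℕ → ℝ) key
      
      rw [pow_add]
      linear_combination x ^ j * x ^ k * keyR
    have hval : ((((m + k).choose m : ℝ) * k.factorial) * x ^ k) *
        ((1 : ℝ) / (1 - x) ^ (m + k + 1)) = T := by
      rw [hT, show (k + m).choose m = (m + k).choose m by rw [Nat.add_comm]]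
      ring
    rw [hfun, ← hval]
    exact h
  have hz : ∑ i ∈ Finset.range k, f i = 0 := by
    apply Finset.sum_eq_zero
    intro i hi
    simp only [Finset.mem_range] at hi
    have : (∏ j ∈ Finset.range k, ((i : ℝ) - j)) = 0 := by
      apply Finset.prod_eq_zero (Finset.mem_range.2 hi)
      simp
    simp [hf, this]
  have h2' : HasSum (fun j : ℕ => f (j + k)) (T - ∑ i ∈ Finset.range k, f i) := by
    rw [hz, sub_zero]; exact h2
  exact (hasSum_nat_add_iff' k).mp h2'

/-- for `|x| < 1`,
`∑_{n≥0} C(n+m,n) (n+r)_{p,λ} x^n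
  = (1/(1-x)^(m+1)) ∑_{k=0}^p {p+r brace k+r}_{r,λ} k! C(k+m,m) (x/(1-x))^k`. -/
theorem tsum_choose_degFallFact (l : ℝ) (p m r : ℕ) (S : ℕ → ℕ → ℝ)
    (hS : ∀ (q : ℕ) (x : ℝ), degFallFact (x + r) l q =
      ∑ k ∈ Finset.range (q + 1), S q k * ∏ i ∈ Finset.range k, (x - i))
    (x : ℝ) (hx : |x| < 1) :
    HasSum (fun n : ℕ => ((n + m).choose n : ℝ) * degFallFact (n + r) l p * x ^ n)
      ((1 / (1 - x) ^ (m + 1)) * ∑ k ∈ Finset.range (p + 1),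
        S p k * k.factorial * ((k + m).choose m : ℝ) * (x / (1 - x)) ^ k) := by
  have h1x : (1 : ℝ) - x ≠ 0 := by
    intro h
    have : x = 1 := by linarith
    rw [this] at hx; norm_num at hx
  have hsum : ∀ k ∈ Finset.range (p + 1),
      HasSum (fun n : ℕ =>
        S p k * (((n + m).choose m : ℝ) * (∏ i ∈ Finset.range k, ((n : ℝ) - i)) * x ^ n))
        (S p k * (((k + m).choose m : ℝ) * k.factorial * x ^ k / (1 - x) ^ (m + k + 1))) :=
    fun k _ => (hasSum_aux m k x hx).mul_left _
  have H := hasSum_sum hsum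
  have heq : (fun n : ℕ => ((n + m).choose n : ℝ) * degFallFact (n + r) l p * x ^ n) =
      (fun n : ℕ => ∑ k ∈ Finset.range (p + 1),
        S p k * (((n + m).choose m : ℝ) * (∏ i ∈ Finset.range k, ((n : ℝ) - i)) * x ^ n)) := by
    funext n
    rw [show ((n + m).choose n : ℝ) = ((n + m).choose m : ℝ) by
      norm_cast; exact Nat.choose_symm_of_eq_add rfl, hS p n]
    rw [Finset.mul_sum, Finset.sum_mul]
    apply Finset.sum_congr rfl
    intro k _
    ring
  rw [heq]
  convert H using 1
  rw [Finset.mul_sum]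
  apply Finset.sum_congr rfl
  intro k _
  rw [div_pow]
  field_simp
  ring
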